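/- Let L be a countable linear order. The following are equivalent: (1) L is a well-order; (2) ℤ[L] is scattered; (3) Aut(ℤ[L]), with the topology of pointwise convergence, is CLI. -/

import Mathlib

universe u v w x

/-- A topological group is CLI if it admits a metric, compatible with its topology,
that is complete and left-invariant. -/
def IsCLI (G : Type u) [Group G] [t : TopologicalSpace G] : Prop :=
  ∃ m : MetricSpace G,
    m.toPseudoMetricSpace.toUniformSpace.toTopologicalSpace = t ∧
    @CompleteSpace G m.toPseudoMetricSpace.toUniformSpace ∧
    ∀ g h h' : G,
      @dist G m.toPseudoMetricSpace.toDist (g * h) (g * h') =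
        @dist G m.toPseudoMetricSpace.toDist h h'

/-- A (strict order) relation is scattered: it has no suborder isomorphic to `ℚ`. -/
def IsScatteredRel {X : Type u} (r : X → X → Prop) : Prop :=
  ¬∃ f : ℚ → X, ∀ q q' : ℚ, q < q' ↔ r (f q) (f q')

/-- The backwards-lexicographic strict order on `ℤ[L]`, the finitely supported functions
`L → ℤ`: `a ≺* b` iff `a ℓ < b ℓ` at the `L`-greatest `ℓ` where `a` and `b` differ. -/
def zlex {L : Type u} [LinearOrder L] (a b : L →₀ ℤ) : Prop :=
  ∃ ℓ : L, a ℓ < b ℓ ∧ ∀ ℓ' : L, ℓ < ℓ' → a ℓ' = b ℓ'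

/-- The topology of pointwise convergence on the group of permutations of a
(discrete) set `N`. -/
def permTop (N : Type u) : TopologicalSpace (Equiv.Perm N) :=
  TopologicalSpace.induced (fun f => (f : N → N))
    (@Pi.topologicalSpace N (fun _ => N) (fun _ => ⊥))

/-- The automorphism group of the linear order `(ℤ[L], ≺*)`, as a subgroup of the
group of permutations of `ℤ[L]`. -/
def zAut (L : Type u) [LinearOrder L] : Subgroup (Equiv.Perm (L →₀ ℤ)) where
  carrier := {f : Equiv.Perm (L →₀ ℤ) | ∀ a b : L →₀ ℤ, zlex a b ↔ zlex (f a) (f b)}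
  one_mem' := by intro a b; rfl
  mul_mem' := by
    intro f g hf hg a b
    rw [hg a b, hf (g a) (g b)]
    rfl
  inv_mem' := by
    intro f hf a b
    have h := hf (f⁻¹ a) (f⁻¹ b)
    rw [show f (f⁻¹ a) = a from Equiv.apply_symm_apply f a,
      show f (f⁻¹ b) = b from Equiv.apply_symm_apply f b] at h
    exact h.symm


namespace ZZ
variable {L : Type u} [LinearOrder L]

/-- existence of greatest difference point -/
lemma exists_top {a b : L →₀ ℤ} (h : a ≠ b) :
    ∃ ℓ, a ℓ ≠ b ℓ ∧ ∀ ℓ', ℓ < ℓ' → a ℓ' = b ℓ' := by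
  have hne : (a - b) ≠ 0 := sub_ne_zero.mpr h
  have hs : (a - b).support.Nonempty := Finsupp.support_nonempty_iff.mpr hne
  refine ⟨(a - b).support.max' hs, ?_, ?_⟩
  · have := (a - b).support.max'_mem hs
    rw [Finsupp.mem_support_iff, Finsupp.sub_apply] at this
    exact fun hc => this (by rw [hc, sub_self])
  · intro ℓ' hl
    by_contra hc
    have : ℓ' ∈ (a - b).support := by
      rw [Finsupp.mem_support_iff, Finsupp.sub_apply]
      exact fun h0 => hc (by linarith [sub_eq_zero.mp h0])
    exact absurd (Finset.le_max' _ _ this) (not_le.mpr hl)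

lemma zlex_ne {a b : L →₀ ℤ} (h : zlex a b) : a ≠ b := by
  obtain ⟨ℓ, h1, -⟩ := h
  exact fun hc => absurd h1 (by rw [hc]; exact lt_irrefl _)

lemma zlex_irrefl (a : L →₀ ℤ) : ¬ zlex a a := fun h => zlex_ne h rfl

/-- uniqueness of the witness against a top-difference -/
lemma witness_eq {a b : L →₀ ℤ} {ℓ₁ ℓ₂ : L}
    (h1 : a ℓ₁ ≠ b ℓ₁) (h2 : ∀ ℓ', ℓ₁ < ℓ' → a ℓ' = b ℓ')
    (h3 : a ℓ₂ ≠ b ℓ₂) (h4 : ∀ ℓ', ℓ₂ < ℓ' → a ℓ' = b ℓ') : ℓ₁ = ℓ₂ := by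
  rcases lt_trichotomy ℓ₁ ℓ₂ with h | h | h
  · exact absurd (h2 _ h) h3
  · exact h
  · exact absurd (h4 _ h) h1

lemma zlex_total {a b : L →₀ ℤ} (h : a ≠ b) : zlex a b ∨ zlex b a := by
  obtain ⟨ℓ, h1, h2⟩ := exists_top h
  rcases lt_or_gt_of_ne h1 with h' | h'
  · exact Or.inl ⟨ℓ, h', h2⟩
  · exact Or.inr ⟨ℓ, h', fun ℓ' hl => (h2 ℓ' hl).symm⟩

lemma zlex_trans {a b c : L →₀ ℤ} (hab : zlex a b) (hbc : zlex b c) : zlex a c := by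
  obtain ⟨ℓ₁, k1, k2⟩ := hab
  obtain ⟨ℓ₂, k3, k4⟩ := hbc
  rcases lt_trichotomy ℓ₁ ℓ₂ with h | h | h
  · exact ⟨ℓ₂, by rw [k2 _ h]; exact k3, fun ℓ' hl => by rw [k2 _ (h.trans hl), k4 _ hl]⟩
  · subst h
    exact ⟨ℓ₁, k1.trans k3, fun ℓ' hl => by rw [k2 _ hl, k4 _ hl]⟩
  · exact ⟨ℓ₁, by rw [← k4 _ h]; exact k1, fun ℓ' hl => by rw [k2 _ hl, k4 _ (h.trans hl)]⟩

lemma zlex_asymm {a b : L →₀ ℤ} (hab : zlex a b) : ¬ zlex b a :=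
  fun h => zlex_irrefl a (zlex_trans hab h)

/-- `a ⪯ b` -/
def zle (a b : L →₀ ℤ) : Prop := a = b ∨ zlex a b

lemma zle_trans {a b c : L →₀ ℤ} (h1 : zle a b) (h2 : zle b c) : zle a c := by
  rcases h1 with rfl | h1
  · exact h2
  rcases h2 with rfl | h2
  · exact Or.inr h1
  exact Or.inr (zlex_trans h1 h2)

/-- "d(a,b) ≤ μ" : a and b agree strictly above μ. -/
def agrAbove (a b : L →₀ ℤ) (μ : L) : Prop := ∀ ℓ, μ < ℓ → a ℓ = b ℓ

lemma agrAbove_trans {a b c : L →₀ ℤ} {μ : L} (h1 : agrAbove a b μ) (h2 : agrAbove b c μ) :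
    agrAbove a c μ := fun ℓ hl => (h1 ℓ hl).trans (h2 ℓ hl)

lemma agrAbove_symm {a b : L →₀ ℤ} {μ : L} (h : agrAbove a b μ) : agrAbove b a μ :=
  fun ℓ hl => (h ℓ hl).symm

/-- sandwich: if x ⪯ z ⪯ y and d(x,y) ≤ μ then d(x,z) ≤ μ. -/
lemma sandwich {x z y : L →₀ ℤ} {μ : L} (h1 : zle x z) (h2 : zle z y)
    (h : agrAbove x y μ) : agrAbove x z μ := by
  rcases h1 with rfl | h1
  · exact fun ℓ _ => rfl
  obtain ⟨ℓ, k1, k2⟩ := exists_top (zlex_ne h1)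
  -- ℓ is the top difference of x, z; the zlex witness equals ℓ
  obtain ⟨w, w1, w2⟩ := h1
  have hw : w = ℓ := witness_eq (ne_of_lt w1) w2 k1 k2
  subst hw
  have hle : ¬ μ < w := by
    intro hlt
    -- then z ≻ y : contradiction
    have : zlex y z := ⟨w, by rw [← h _ hlt]; exact w1, fun ℓ' hl' => by
      rw [← h _ (hlt.trans hl'), k2 _ hl']⟩
    rcases h2 with rfl | h2
    · exact zlex_irrefl _ this
    · exact zlex_asymm h2 this
  intro ℓ' hl'
  exact k2 _ (lt_of_le_of_lt (not_lt.mp hle) hl')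

lemma sandwich' {x z y : L →₀ ℤ} {μ : L} (h1 : zle x z) (h2 : zle z y)
    (h : agrAbove x y μ) : agrAbove z y μ :=
  agrAbove_trans (agrAbove_symm (sandwich h1 h2 h)) h

/-- if x ⪯ z with d(x,z) ≤ μ then x μ ≤ z μ -/
lemma coord_mono {x z : L →₀ ℤ} {μ : L} (h1 : zle x z) (h : agrAbove x z μ) :
    x μ ≤ z μ := by
  rcases h1 with rfl | h1
  · exact le_refl _
  obtain ⟨w, w1, w2⟩ := h1
  rcases lt_trichotomy w μ with hc | hc | hc
  · rw [w2 _ hc]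
  · subst hc; exact le_of_lt w1
  · exact absurd (h _ hc) (ne_of_lt w1)

/-- translation invariance -/
lemma zlex_add_right {a b c : L →₀ ℤ} (h : zlex a b) : zlex (a + c) (b + c) := by
  obtain ⟨ℓ, h1, h2⟩ := h
  exact ⟨ℓ, by simp only [Finsupp.add_apply]; omega, fun ℓ' hl => by
    simp only [Finsupp.add_apply, h2 _ hl]⟩

instance : IsTrichotomous (L →₀ ℤ) zlex :=
  ⟨fun a b => by
    rcases eq_or_ne a b with rfl | h
    · exact fun _ _ => rfl
    · rcases zlex_total h with h' | h'
      · exact fun h1 _ => absurd h' h1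
      · exact fun _ h2 => absurd h' h2⟩

instance : IsTrans (L →₀ ℤ) zlex := ⟨fun _ _ _ => zlex_trans⟩
instance : IsIrrefl (L →₀ ℤ) zlex := ⟨zlex_irrefl⟩
instance : IsStrictTotalOrder (L →₀ ℤ) zlex := { }


lemma strictMonoSeq_growth {g : ℕ → ℤ} (h : ∀ j, g j < g (j + 1)) :
    ∀ j, g 0 + j ≤ g j := by
  intro j
  induction j with
  | zero => simp
  | succ n ih => have := h n; push_cast; omega

lemma auto_agrAbove (hwf : WellFoundedLT L) (μ : L) :
    ∀ g : Equiv.Perm (L →₀ ℤ), g ∈ zAut L →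
    ∀ x y : L →₀ ℤ, zle x y → agrAbove x y μ → agrAbove (g x) (g y) μ := by
  refine hwf.wf.induction
    (C := fun μ => ∀ g : Equiv.Perm (L →₀ ℤ), g ∈ zAut L →
      ∀ x y : L →₀ ℤ, zle x y → agrAbove x y μ → agrAbove (g x) (g y) μ) μ ?_
  clear μ
  intro μ IH g hg x y hxy hagr
  rcases hxy with rfl | hlt
  · exact fun ℓ _ => rfl
  have hgxy : zlex (g x) (g y) := (hg x y).mp hlt
  obtain ⟨κ, t1, t2⟩ := exists_top (zlex_ne hgxy)
  by_contra hcon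
  obtain ⟨ℓ'', hμℓ, hne⟩ : ∃ ℓ, μ < ℓ ∧ g x ℓ ≠ g y ℓ := by
    by_contra h2
    exact hcon fun ℓ hl => by_contra fun hc => h2 ⟨ℓ, hl, hc⟩
  have hκℓ : ℓ'' ≤ κ := by
    by_contra hc
    exact hne (t2 _ (not_le.mp hc))
  have hμκ : μ < κ := lt_of_lt_of_le hμℓ hκℓ
  have hκlt : g x κ < g y κ := by
    obtain ⟨w, w1, w2⟩ := hgxy
    have : w = κ := witness_eq (ne_of_lt w1) w2 t1 t2
    subst this; exact w1
  -- the ladder p j = g x + j · e_μ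
  set p : ℕ → (L →₀ ℤ) := fun j => g x + Finsupp.single μ (j : ℤ) with hp
  have papply : ∀ j ℓ, p j ℓ = g x ℓ + (if μ = ℓ then (j : ℤ) else 0) := by
    intro j ℓ; simp [hp, Finsupp.add_apply, Finsupp.single_apply]
  have pdiff : ∀ i j : ℕ, i ≠ j → p i μ ≠ p j μ := by
    intro i j hij
    rw [papply, papply, if_pos rfl, if_pos rfl]
    intro hc
    exact hij (by exact_mod_cast add_left_cancel hc)
  have pstep : ∀ j, zlex (p j) (p (j + 1)) := by
    intro j
    refine ⟨μ, by simp only [papply, if_pos rfl]; push_cast; omega, fun ℓ' hl' => ?_⟩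
    simp only [papply, if_neg (ne_of_lt hl')]
  have plty : ∀ j, zlex (p j) (g y) := by
    intro j
    refine ⟨κ, by rw [papply, if_neg (ne_of_lt hμκ)]; simpa using hκlt, fun ℓ' hl' => ?_⟩
    rw [papply, if_neg (ne_of_lt (hμκ.trans hl')), add_zero]
    exact t2 _ hl'
  set q : ℕ → (L →₀ ℤ) := fun j => g.symm (p j) with hq
  have gq : ∀ j, g (q j) = p j := fun j => g.apply_symm_apply _
  have q0 : q 0 = x := by
    have : p 0 = g x := by simp [hp]
    rw [hq]; simp only [this]; exact g.symm_apply_apply x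
  have qstep : ∀ j, zlex (q j) (q (j + 1)) := by
    intro j
    have := (hg (q j) (q (j + 1))).mpr
    rw [gq, gq] at this
    exact this (pstep j)
  have qlty : ∀ j, zlex (q j) y := by
    intro j
    have h2 := (hg (q j) y).mpr
    rw [gq] at h2
    exact h2 (plty j)
  have qchain : ∀ i j : ℕ, i ≤ j → zle (q i) (q j) := by
    intro i j hij
    induction j with
    | zero => rw [Nat.le_zero.mp hij]; exact Or.inl rfl
    | succ n ihn =>
      rcases Nat.lt_or_ge i (n + 1) with h | h
      · exact zle_trans (ihn (Nat.lt_succ_iff.mp h)) (Or.inr (qstep n))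
      · rw [Nat.le_antisymm hij h]; exact Or.inl rfl
  have qx : ∀ j, zle x (q j) := fun j => q0 ▸ qchain 0 j (Nat.zero_le _)
  have qagrY : ∀ j, agrAbove (q j) y μ := fun j =>
    sandwich' (qx j) (Or.inr (qlty j)) hagr
  have qagr : ∀ i j : ℕ, i ≤ j → agrAbove (q i) (q j) μ := fun i j hij =>
    sandwich (qchain i j hij) (Or.inr (qlty j)) (qagrY i)
  -- coordinates at μ strictly increase
  have qdiff : ∀ j : ℕ, q j μ < q (j + 1) μ := by
    intro j
    have hqne : q j ≠ q (j + 1) := zlex_ne (qstep j)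
    obtain ⟨ν, v1, v2⟩ := exists_top hqne
    have hνμ : ¬ μ < ν := fun hc => v1 (qagr j (j + 1) (Nat.le_succ _) _ hc)
    have hνeq : ν = μ := by
      rcases lt_or_eq_of_le (not_lt.mp hνμ) with hc | hc
      · -- ν < μ : use IH to contradict p's difference at μ
        exfalso
        have hagrν : agrAbove (q j) (q (j + 1)) ν := fun ℓ hl => v2 _ hl
        have := IH ν hc g hg (q j) (q (j + 1)) (Or.inr (qstep j)) hagrν
        rw [gq, gq] at this
        exact pdiff j (j + 1) (by omega) (this μ hc)
      · exact hc
    subst hνeq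
    obtain ⟨w, w1, w2⟩ := qstep j
    have : w = ν := witness_eq (ne_of_lt w1) w2 v1 v2
    subst this; exact w1
  have qgrow : ∀ j : ℕ, x μ + j ≤ q j μ := by
    have h := strictMonoSeq_growth (g := fun j => q j μ) qdiff
    intro j
    simpa only [q0] using h j
  have qbound : ∀ j : ℕ, q j μ ≤ y μ := fun j =>
    coord_mono (Or.inr (qlty j)) (qagrY j)
  have hj := qgrow ((y μ - x μ).toNat + 1)
  have hb := qbound ((y μ - x μ).toNat + 1)
  have := Int.self_le_toNat (y μ - x μ)
  push_cast at hj
  omega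

lemma auto_agrAbove' (hwf : WellFoundedLT L) {g : Equiv.Perm (L →₀ ℤ)} (hg : g ∈ zAut L)
    {x y : L →₀ ℤ} {μ : L} (h : agrAbove x y μ) : agrAbove (g x) (g y) μ := by
  rcases eq_or_ne x y with rfl | hne
  · exact fun ℓ _ => rfl
  rcases zlex_total hne with h' | h'
  · exact auto_agrAbove hwf μ g hg x y (Or.inr h') h
  · exact agrAbove_symm (auto_agrAbove hwf μ g hg y x (Or.inr h') (agrAbove_symm h))

lemma auto_agrAbove_iff (hwf : WellFoundedLT L) {g : Equiv.Perm (L →₀ ℤ)} (hg : g ∈ zAut L)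
    {x y : L →₀ ℤ} {μ : L} : agrAbove x y μ ↔ agrAbove (g x) (g y) μ := by
  refine ⟨auto_agrAbove' hwf hg, fun h => ?_⟩
  have := auto_agrAbove' hwf ((zAut L).inv_mem hg) (x := g x) (y := g y) h
  simpa using this

lemma exists_crossing {φ : ℤ → ℤ} (hmono : ∀ i j : ℤ, i < j → φ i < φ j) (c : ℤ)
    (hne : ∀ j, φ j ≠ c) : ∃ j, φ j < c ∧ c < φ (j + 1) := by
  classical
  have growth_up : ∀ n : ℕ, φ 0 + n ≤ φ n := by
    intro n
    induction n with
    | zero => simp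
    | succ k ih => have := hmono k (k + 1) (by omega); push_cast at ih ⊢; omega
  have growth_dn : ∀ n : ℕ, φ (-(n : ℤ)) ≤ φ 0 - n := by
    intro n
    induction n with
    | zero => simp
    | succ k ih => have := hmono (-(k + 1 : ℤ)) (-k) (by omega); push_cast at ih ⊢; omega
  have hup : ∃ j₁ : ℤ, c < φ j₁ := by
    refine ⟨((c - φ 0).toNat + 1 : ℕ), ?_⟩
    have h1 := growth_up ((c - φ 0).toNat + 1)
    have h2 := Int.self_le_toNat (c - φ 0)
    push_cast at h1 ⊢
    omega
  have hdn : ∃ j₀ : ℤ, φ j₀ < c := by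
    refine ⟨-(((φ 0 - c).toNat + 1 : ℕ) : ℤ), ?_⟩
    have h1 := growth_dn ((φ 0 - c).toNat + 1)
    have h2 := Int.self_le_toNat (φ 0 - c)
    push_cast at h1 ⊢
    omega
  obtain ⟨j₀, hj₀⟩ := hdn
  have hbdd : ∃ b, ∀ z : ℤ, c < φ z → b ≤ z := by
    refine ⟨j₀, fun z hz => ?_⟩
    by_contra hc
    exact absurd (hmono z j₀ (by omega)) (by omega)
  obtain ⟨lb, hlb1, hlb2⟩ := Int.exists_least_of_bdd hbdd hup
  refine ⟨lb - 1, ?_, by simpa using hlb1⟩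
  have h1 : ¬ c < φ (lb - 1) := fun hc => by have := hlb2 _ hc; omega
  have h2 := hne (lb - 1)
  omega

lemma stable_limit_surjective (hwf : WellFoundedLT L)
    (g : ℕ → Equiv.Perm (L →₀ ℤ)) (hgmem : ∀ n, g n ∈ zAut L)
    (f : (L →₀ ℤ) → (L →₀ ℤ))
    (hstab : ∀ x, ∃ N, ∀ n ≥ N, g n x = f x) :
    Function.Surjective f := by
  intro b
  by_contra hcon
  push_neg at hcon
  choose N hN using hstab
  -- facts about f
  have hf : ∀ a c : L →₀ ℤ, zlex a c ↔ zlex (f a) (f c) := by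
    intro a c
    rw [← hN a (max (N a) (N c)) (le_max_left _ _),
      ← hN c (max (N a) (N c)) (le_max_right _ _)]
    exact hgmem _ a c
  have hfinj : Function.Injective f := by
    intro a c hac
    by_contra hne
    rcases zlex_total hne with h | h
    · exact zlex_ne ((hf a c).mp h) hac
    · exact zlex_ne ((hf c a).mp h) hac.symm
  have hfagr : ∀ {a c : L →₀ ℤ} {μ : L}, agrAbove a c μ ↔ agrAbove (f a) (f c) μ := by
    intro a c μ
    rw [← hN a (max (N a) (N c)) (le_max_left _ _),
      ← hN c (max (N a) (N c)) (le_max_right _ _)]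
    exact auto_agrAbove_iff hwf (hgmem _)
  -- the minimal level of disagreement with b
  set SS : Set L := {ℓ | ∃ x, f x ℓ ≠ b ℓ ∧ ∀ ℓ', ℓ < ℓ' → f x ℓ' = b ℓ'} with hSS
  have hSSne : SS.Nonempty := by
    obtain ⟨ℓ, h1, h2⟩ := exists_top (hcon b)
    exact ⟨ℓ, b, h1, h2⟩
  set lam : L := hwf.wf.min SS hSSne with hlam
  obtain ⟨x₀, hx1, hx2⟩ := hwf.wf.min_mem SS hSSne
  have hmin : ∀ ℓ ∈ SS, ¬ ℓ < lam := fun ℓ hℓ => hwf.wf.not_lt_min SS hℓ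
  -- the ladder
  set y : ℤ → (L →₀ ℤ) := fun j => x₀ + Finsupp.single lam j with hy
  have yapply : ∀ (j : ℤ) ℓ, y j ℓ = x₀ ℓ + (if lam = ℓ then j else 0) := by
    intro j ℓ; simp [hy, Finsupp.add_apply, Finsupp.single_apply]
  have yagr : ∀ i j : ℤ, agrAbove (y i) (y j) lam := by
    intro i j ℓ hl
    rw [yapply, yapply, if_neg (ne_of_lt hl), if_neg (ne_of_lt hl)]
  have ystep : ∀ i j : ℤ, i < j → zlex (y i) (y j) := by
    intro i j hij
    refine ⟨lam, ?_, fun ℓ' hl' => yagr i j ℓ' hl'⟩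
    rw [yapply, yapply, if_pos rfl, if_pos rfl]
    omega
  have fyagr : ∀ i j : ℤ, agrAbove (f (y i)) (f (y j)) lam :=
    fun i j => hfagr.mp (yagr i j)
  have fydiff : ∀ i j : ℤ, i ≠ j → f (y i) lam ≠ f (y j) lam := by
    intro i j hij heq
    have hfne : f (y i) ≠ f (y j) := by
      intro hc
      have h3 : y i lam = y j lam := by rw [hfinj hc]
      rw [yapply, yapply, if_pos rfl, if_pos rfl] at h3
      omega
    obtain ⟨ν, v1, v2⟩ := exists_top hfne
    have hν1 : ¬ lam < ν := fun hc => v1 (fyagr i j ν hc)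
    have hν2 : ν ≠ lam := fun hc => v1 (hc ▸ heq)
    have hνlt : ν < lam := lt_of_le_of_ne (not_lt.mp hν1) hν2
    have : agrAbove (y i) (y j) ν := hfagr.mpr (fun ℓ hl => v2 ℓ hl)
    have := this lam hνlt
    rw [yapply, yapply, if_pos rfl, if_pos rfl] at this
    omega
  set φ : ℤ → ℤ := fun j => f (y j) lam with hφ
  have φmono : ∀ i j : ℤ, i < j → φ i < φ j := by
    intro i j hij
    obtain ⟨w, w1, w2⟩ := (hf _ _).mp (ystep i j hij)
    have hw : w = lam := by
      rcases lt_trichotomy w lam with hc | hc | hc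
      · exact absurd (w2 lam hc) (fydiff i j (ne_of_lt hij))
      · exact hc
      · exact absurd (fyagr i j w hc) (ne_of_lt w1)
    subst hw; exact w1
  have hyb : ∀ j : ℤ, agrAbove (f (y j)) b lam := by
    intro j
    have h0 : y 0 = x₀ := by
      ext ℓ; rw [yapply]; simp
    refine agrAbove_trans (fyagr j 0) ?_
    rw [h0]
    exact fun ℓ hl => hx2 ℓ hl
  have hφne : ∀ j, φ j ≠ b lam := by
    intro j heq
    obtain ⟨ℓx, e1, e2⟩ := exists_top (hcon (y j))
    have hin : ℓx ∈ SS := ⟨y j, e1, e2⟩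
    have h1 : ¬ lam < ℓx := fun hc => e1 (hyb j ℓx hc)
    have h2 : ℓx ≠ lam := fun hc => e1 (by rw [hc]; exact heq)
    exact hmin ℓx hin (lt_of_le_of_ne (not_lt.mp h1) h2)
  obtain ⟨j, hj1, hj2⟩ := exists_crossing φmono (b lam) hφne
  set n : ℕ := max (N (y j)) (N (y (j + 1))) with hn
  have hgyj : g n (y j) = f (y j) := hN _ _ (le_max_left _ _)
  have hgyj1 : g n (y (j + 1)) = f (y (j + 1)) := hN _ _ (le_max_right _ _)
  set cn : (L →₀ ℤ) := (g n).symm b with hcn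
  have hgcn : g n cn = b := (g n).apply_symm_apply b
  have h1 : zlex (y j) cn := by
    rw [hgmem n (y j) cn, hgyj, hgcn]
    exact ⟨lam, hj1, fun ℓ hl => hyb j ℓ hl⟩
  have h2 : zlex cn (y (j + 1)) := by
    rw [hgmem n cn (y (j + 1)), hgcn, hgyj1]
    exact ⟨lam, hj2, fun ℓ hl => (hyb (j + 1) ℓ hl).symm⟩
  have sandw1 : agrAbove (y j) cn lam := sandwich (Or.inr h1) (Or.inr h2) (yagr j (j + 1))
  have sandw2 : agrAbove cn (y (j + 1)) lam := sandwich' (Or.inr h1) (Or.inr h2) (yagr j (j + 1))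
  have bd1 : y j lam ≤ cn lam := coord_mono (Or.inr h1) sandw1
  have bd2 : cn lam ≤ y (j + 1) lam := coord_mono (Or.inr h2) sandw2
  have hyjlam : y (j + 1) lam = y j lam + 1 := by
    rw [yapply, yapply, if_pos rfl, if_pos rfl]; omega
  -- cn matches one of the endpoints at lam and above
  have final : ∀ y' : L →₀ ℤ, agrAbove cn y' lam → cn lam = y' lam → g n y' = f y' → False := by
    intro y' hagr' heq' hgy'
    have hcney : cn ≠ y' := by
      intro hc
      have : g n cn = g n y' := congrArg _ hc
      rw [hgcn, hgy'] at this
      exact hcon y' this.symm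
    obtain ⟨ν, v1, v2⟩ := exists_top hcney
    have hν1 : ¬ lam < ν := fun hc => v1 (hagr' ν hc)
    have hν2 : ν ≠ lam := fun hc => v1 (hc ▸ heq')
    have hνlt : ν < lam := lt_of_le_of_ne (not_lt.mp hν1) hν2
    have htr : agrAbove (g n cn) (g n y') ν :=
      auto_agrAbove' hwf (hgmem n) (fun ℓ hl => v2 ℓ hl)
    rw [hgcn, hgy'] at htr
    obtain ⟨ℓx, e1, e2⟩ := exists_top (hcon y')
    have hin : ℓx ∈ SS := ⟨y', e1, e2⟩
    have : ν < ℓx := lt_of_lt_of_le hνlt (not_lt.mp (hmin ℓx hin))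
    exact e1 (htr ℓx this).symm
  rcases eq_or_lt_of_le bd1 with hcase | hcase
  · exact final (y j) (agrAbove_symm sandw1) hcase.symm hgyj
  · have : cn lam = y (j + 1) lam := by omega
    exact final (y (j + 1)) sandw2 this hgyj1

lemma scattered_of_wf (hwf : WellFoundedLT L) : IsScatteredRel (zlex (L := L)) := by
  rintro ⟨f, hfq⟩
  have hfne : ∀ q q' : ℚ, q < q' → f q ≠ f q' := fun q q' h => zlex_ne ((hfq q q').mp h)
  set SS : Set L := {ℓ | ∃ q q' : ℚ, f q ℓ ≠ f q' ℓ ∧ ∀ ℓ', ℓ < ℓ' → f q ℓ' = f q' ℓ'} with hSS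
  have hSSne : SS.Nonempty := by
    obtain ⟨ℓ, h1, h2⟩ := exists_top (hfne 0 1 one_pos)
    exact ⟨ℓ, 0, 1, h1, h2⟩
  set lam : L := hwf.wf.min SS hSSne with hlam
  obtain ⟨q0, q1, hq1, hq2⟩ := hwf.wf.min_mem SS hSSne
  have hmin : ∀ ℓ ∈ SS, ¬ ℓ < lam := fun ℓ hℓ => hwf.wf.not_lt_min SS hℓ
  -- WLOG q0 < q1
  have main : ∀ a b : ℚ, a < b → (f a) lam ≠ (f b) lam →
      (∀ ℓ', lam < ℓ' → f a ℓ' = f b ℓ') → False := by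
    intro q0 q1 hqlt hq1 hq2
    have hagr : agrAbove (f q0) (f q1) lam := fun ℓ hl => hq2 ℓ hl
    have key : ∀ r r' : ℚ, q0 ≤ r → r < r' → r' ≤ q1 → f r lam < f r' lam := by
      intro r r' h1 h2 h3
      have hzle : ∀ a b : ℚ, a ≤ b → zle (f a) (f b) := by
        intro a b hab
        rcases eq_or_lt_of_le hab with rfl | hab
        · exact Or.inl rfl
        · exact Or.inr ((hfq a b).mp hab)
      have s1 : agrAbove (f r) (f q1) lam :=
        sandwich' (hzle _ _ h1) (hzle _ _ (le_of_lt (lt_of_lt_of_le h2 h3))) hagr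
      have s2 : agrAbove (f r) (f r') lam :=
        sandwich (hzle _ _ (le_of_lt h2)) (hzle _ _ h3) s1
      obtain ⟨w, w1, w2⟩ := (hfq r r').mp h2
      have hwlam : ¬ lam < w := fun hc => (ne_of_lt w1) (s2 w hc)
      have hin : w ∈ SS := ⟨r, r', ne_of_lt w1, w2⟩
      have hweq : w = lam := le_antisymm (not_lt.mp hwlam) (not_lt.mp (hmin w hin))
      subst hweq; exact w1
    -- the increasing rationals
    have hd : (0 : ℚ) < q1 - q0 := by linarith
    set r : ℕ → ℚ := fun i => q1 - (q1 - q0) / (i + 1) with hr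
    have hr0 : r 0 = q0 := by simp [hr]
    have hrlt : ∀ i : ℕ, r i < r (i + 1) := by
      intro i
      have h1 : (0:ℚ) < (i:ℚ) + 1 := by positivity
      have h2 : ((i:ℚ) + 1) < ((i:ℚ) + 1 + 1) := by linarith
      have := div_lt_div_of_pos_left hd h1 h2
      simp only [hr]
      push_cast
      linarith
    have hrq0 : ∀ i, q0 ≤ r i := by
      intro i
      have h1 : (q1 - q0) / (i + 1) ≤ q1 - q0 := by
        apply div_le_self (le_of_lt hd)
        have : (0:ℚ) ≤ (i:ℚ) := by positivity
        linarith
      simp only [hr]; linarith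
    have hrq1 : ∀ i, r i < q1 := by
      intro i
      have h1 : (0:ℚ) < (q1 - q0) / (i + 1) := by positivity
      simp only [hr]; linarith
    have hgmono : ∀ i : ℕ, f (r i) lam < f (r (i+1)) lam :=
      fun i => key _ _ (hrq0 i) (hrlt i) (le_of_lt (hrq1 (i+1)))
    have hgrow := strictMonoSeq_growth (g := fun i => f (r i) lam) hgmono
    have hbound : ∀ i, f (r i) lam < f q1 lam :=
      fun i => key _ _ (hrq0 i) (hrq1 i) (le_refl _)
    have h1 := hgrow ((f q1 lam - f q0 lam).toNat + 1)
    have h2 := hbound ((f q1 lam - f q0 lam).toNat + 1)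
    have h3 := Int.self_le_toNat (f q1 lam - f q0 lam)
    simp only [hr0] at h1
    push_cast at h1
    omega
  have hne : q0 ≠ q1 := fun hc => hq1 (by rw [hc])
  rcases lt_or_gt_of_ne hne with h | h
  · exact main q0 q1 h hq1 hq2
  · exact main q1 q0 h (Ne.symm hq1) (fun ℓ' hl' => (hq2 ℓ' hl').symm)

lemma iso_rat_of_props {S : Type u} (r : S → S → Prop) [Countable S]
    (hsto : IsStrictTotalOrder S r)
    (hne : Nonempty S)
    (hdense : ∀ s t, r s t → ∃ u, r s u ∧ r u t)
    (hmax : ∀ s, ∃ t, r s t) (hmin : ∀ s, ∃ t, r t s) :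
    ∃ e : S ≃ ℚ, ∀ s t, r s t ↔ e s < e t := by
  classical
  haveI := hsto
  haveI := hne
  letI lo : LinearOrder S := linearOrderOfSTO r
  haveI : DenselyOrdered S := ⟨fun s t hst => hdense s t hst⟩
  haveI : NoMaxOrder S := ⟨fun s => hmax s⟩
  haveI : NoMinOrder S := ⟨fun s => hmin s⟩
  obtain ⟨oi⟩ := Order.iso_of_countable_dense (α := S) (β := ℚ)
  exact ⟨oi.toEquiv, fun s t => Iff.symm oi.lt_iff_lt⟩

section RatIso
variable [Countable L]

lemma exists_rat_iso (l : ℕ → L) (hl : ∀ k, l (k + 1) < l k) :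
    ∃ e : {a : L →₀ ℤ // ∀ ℓ, a ℓ ≠ 0 → (ℓ ≤ l 0 ∧ ∃ k, l k ≤ ℓ)} ≃ ℚ,
      ∀ s t, zlex s.1 t.1 ↔ e s < e t := by
  classical
  have hl0 : ∀ k, l k ≤ l 0 := by
    intro k
    induction k with
    | zero => exact le_refl _
    | succ n ih => exact le_of_lt (lt_of_lt_of_le (hl n) ih)
  set S := {a : L →₀ ℤ // ∀ ℓ, a ℓ ≠ 0 → (ℓ ≤ l 0 ∧ ∃ k, l k ≤ ℓ)} with hS
  set rel : S → S → Prop := fun s t => zlex s.1 t.1 with hrel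
  have htri : IsTrichotomous S rel := ⟨fun s t => by
    rcases eq_or_ne s t with rfl | h
    · exact fun _ _ => rfl
    · rcases zlex_total (fun hc => h (Subtype.ext hc)) with h' | h'
      · exact fun h1 _ => absurd h' h1
      · exact fun _ h2 => absurd h' h2⟩
  have htrans : IsTrans S rel := ⟨fun _ _ _ => zlex_trans⟩
  have hirr : IsIrrefl S rel := ⟨fun s => zlex_irrefl s.1⟩
  have hsto : IsStrictTotalOrder S rel :=
    { trichotomous := htri.1, trans := htrans.1, irrefl := hirr.1 }
  -- membership helpers
  have hmem_single : ∀ (a : L →₀ ℤ) (m : L) (c : ℤ),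
      (∀ ℓ, a ℓ ≠ 0 → (ℓ ≤ l 0 ∧ ∃ k, l k ≤ ℓ)) → (m ≤ l 0 ∧ ∃ k, l k ≤ m) →
      ∀ ℓ, (a + Finsupp.single m c) ℓ ≠ 0 → (ℓ ≤ l 0 ∧ ∃ k, l k ≤ ℓ) := by
    intro a m c ha hm ℓ hℓ
    rw [Finsupp.add_apply, Finsupp.single_apply] at hℓ
    by_cases hcase : m = ℓ
    · exact hcase ▸ hm
    · rw [if_neg hcase, add_zero] at hℓ
      exact ha ℓ hℓ
  have hl0mem : l 0 ≤ l 0 ∧ ∃ k, l k ≤ l 0 := ⟨le_refl _, 0, le_refl _⟩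
  have single_zlex : ∀ (a : L →₀ ℤ) (m : L) (c : ℤ), 0 < c →
      zlex a (a + Finsupp.single m c) := by
    intro a m c hc
    refine ⟨m, ?_, fun ℓ' hl' => ?_⟩
    · rw [Finsupp.add_apply, Finsupp.single_apply, if_pos rfl]; omega
    · rw [Finsupp.add_apply, Finsupp.single_apply, if_neg (ne_of_lt hl'), add_zero]
  have single_zlex' : ∀ (a : L →₀ ℤ) (m : L) (c : ℤ), c < 0 →
      zlex (a + Finsupp.single m c) a := by
    intro a m c hc
    refine ⟨m, ?_, fun ℓ' hl' => ?_⟩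
    · rw [Finsupp.add_apply, Finsupp.single_apply, if_pos rfl]; omega
    · rw [Finsupp.add_apply, Finsupp.single_apply, if_neg (ne_of_lt hl'), add_zero]
  have hneS : Nonempty S := ⟨⟨0, fun ℓ h => absurd rfl h⟩⟩
  have hmax : ∀ s : S, ∃ t : S, rel s t := by
    intro s
    exact ⟨⟨s.1 + Finsupp.single (l 0) 1, hmem_single s.1 (l 0) 1 s.2 hl0mem⟩,
      single_zlex s.1 (l 0) 1 one_pos⟩
  have hmin : ∀ s : S, ∃ t : S, rel t s := by
    intro s
    exact ⟨⟨s.1 + Finsupp.single (l 0) (-1), hmem_single s.1 (l 0) (-1) s.2 hl0mem⟩,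
      single_zlex' s.1 (l 0) (-1) (by omega)⟩
  have hdense : ∀ s t : S, rel s t → ∃ u : S, rel s u ∧ rel u t := by
    intro s t hst
    obtain ⟨w, w1, w2⟩ := hst
    have hwM : w ≤ l 0 ∧ ∃ k, l k ≤ w := by
      rcases eq_or_ne (s.1 w) 0 with h0 | h0
      · exact t.2 w (by omega)
      · exact s.2 w h0
    obtain ⟨hwl0, k, hkw⟩ := hwM
    have hmem2 : l (k+1) ≤ l 0 ∧ ∃ k', l k' ≤ l (k+1) := ⟨hl0 (k+1), k+1, le_refl _⟩
    have hlt2 : l (k + 1) < w := lt_of_lt_of_le (hl k) hkw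
    refine ⟨⟨t.1 + Finsupp.single (l (k+1)) (-1), hmem_single t.1 _ _ t.2 hmem2⟩, ?_, ?_⟩
    · refine ⟨w, ?_, fun ℓ' hl' => ?_⟩
      · rw [Finsupp.add_apply, Finsupp.single_apply, if_neg (ne_of_lt hlt2), add_zero]
        exact w1
      · rw [Finsupp.add_apply, Finsupp.single_apply, if_neg (ne_of_lt (hlt2.trans hl')),
          add_zero]
        exact w2 ℓ' hl'
    · exact single_zlex' t.1 _ _ (by omega)
  exact iso_rat_of_props rel hsto hneS hdense hmax hmin

lemma not_scattered_of_not_wf (h : ¬ WellFoundedLT L) :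
    ¬ IsScatteredRel (zlex (L := L)) := by
  intro hsc
  have h' : ¬ WellFounded ((· < ·) : L → L → Prop) := fun w => h ⟨w⟩
  have h2 : ¬ IsEmpty ((fun a b : ℕ => a > b) ↪r ((· < ·) : L → L → Prop)) := by
    intro hie
    exact h' (RelEmbedding.wellFounded_iff_isEmpty.mpr hie)
  obtain ⟨emb⟩ := not_isEmpty_iff.mp h2
  have hl : ∀ k : ℕ, emb (k + 1) < emb k := fun k => emb.map_rel_iff.mpr (Nat.lt_succ_self k)
  obtain ⟨e, he⟩ := exists_rat_iso (fun k => emb k) hl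
  refine hsc ⟨fun q => (e.symm q).1, fun q q' => ?_⟩
  rw [he (e.symm q) (e.symm q'), e.apply_symm_apply, e.apply_symm_apply]

end RatIso


lemma mem_zAut_iff {f : Equiv.Perm (L →₀ ℤ)} :
    f ∈ zAut L ↔ ∀ a b, zlex a b ↔ zlex (f a) (f b) := Iff.rfl

section CLIwf
variable [Countable L]

set_option maxHeartbeats 1000000 in
lemma isCLI_of_wf (hwf : WellFoundedLT L) :
    letI : TopologicalSpace (Equiv.Perm (L →₀ ℤ)) := permTop (L →₀ ℤ)
    IsCLI ↥(zAut L) := by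
  classical
  letI tP : TopologicalSpace (Equiv.Perm (L →₀ ℤ)) := permTop (L →₀ ℤ)
  show IsCLI ↥(zAut L)
  set G := ↥(zAut L) with hG
  obtain ⟨ι, hι⟩ := (countable_iff_exists_injective (L →₀ ℤ)).mp inferInstance
  set Pd : G → G → ℕ → Prop := fun g h n => ∃ x, ι x = n ∧ g.1 x ≠ h.1 x with hPd
  set d : G → G → ℝ := fun g h =>
    if hx : ∃ n, Pd g h n then (2⁻¹ : ℝ) ^ (Nat.find hx) else 0 with hd
  have hd_eq : ∀ (g h : G) (hx : ∃ n, Pd g h n), d g h = (2⁻¹ : ℝ) ^ (Nat.find hx) := by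
    intro g h hx
    simp only [hd]
    rw [dif_pos hx]
  have hd_eq0 : ∀ (g h : G), (¬ ∃ n, Pd g h n) → d g h = 0 := by
    intro g h hx
    simp only [hd]
    rw [dif_neg hx]
  have hne_of : ∀ g h : G, g ≠ h → ∃ x, g.1 x ≠ h.1 x := by
    intro g h hne
    by_contra hc
    push_neg at hc
    exact hne (Subtype.ext (Equiv.ext fun x => hc x))
  have hd0 : ∀ g : G, d g g = 0 := by
    intro g
    apply hd_eq0
    rintro ⟨n, x, -, hx2⟩
    exact hx2 rfl
  have hdpos : ∀ g h : G, g ≠ h → 0 < d g h := by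
    intro g h hne
    obtain ⟨x, hx⟩ := hne_of g h hne
    rw [hd_eq g h ⟨ι x, x, rfl, hx⟩]
    positivity
  have hdnn : ∀ g h : G, 0 ≤ d g h := by
    intro g h
    by_cases hx : ∃ n, Pd g h n
    · rw [hd_eq g h hx]; positivity
    · rw [hd_eq0 g h hx]
  have hdcongr : ∀ (g h g' h' : G), (∀ n, Pd g h n ↔ Pd g' h' n) → d g h = d g' h' := by
    intro g h g' h' hiff
    by_cases hx : ∃ n, Pd g h n
    · have hx' : ∃ n, Pd g' h' n := ⟨hx.choose, (hiff _).mp hx.choose_spec⟩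
      have hfind : Nat.find hx = Nat.find hx' :=
        le_antisymm (Nat.find_le ((hiff _).mpr (Nat.find_spec hx')))
          (Nat.find_le ((hiff _).mp (Nat.find_spec hx)))
      rw [hd_eq _ _ hx, hd_eq _ _ hx', hfind]
    · have hx' : ¬ ∃ n, Pd g' h' n := fun ⟨n, hn⟩ => hx ⟨n, (hiff n).mpr hn⟩
      rw [hd_eq0 _ _ hx, hd_eq0 _ _ hx']
  have hdsymm : ∀ g h : G, d g h = d h g := fun g h =>
    hdcongr g h h g fun n =>
      ⟨fun ⟨x, h1, h2⟩ => ⟨x, h1, h2.symm⟩, fun ⟨x, h1, h2⟩ => ⟨x, h1, h2.symm⟩⟩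
  have hagree : ∀ (g h : G) (n : ℕ), d g h < (2⁻¹ : ℝ) ^ n →
      ∀ x, ι x ≤ n → g.1 x = h.1 x := by
    intro g h n hlt x hx
    by_contra hneq
    have hex : ∃ m, Pd g h m := ⟨ι x, x, rfl, hneq⟩
    rw [hd_eq g h hex] at hlt
    have h1 : Nat.find hex ≤ n := le_trans (Nat.find_le ⟨x, rfl, hneq⟩) hx
    have h2 : (2⁻¹ : ℝ) ^ n ≤ (2⁻¹ : ℝ) ^ (Nat.find hex) :=
      pow_le_pow_of_le_one (by norm_num) (by norm_num) h1
    linarith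
  have hsmall : ∀ (g h : G) (n : ℕ), (∀ x, ι x ≤ n → g.1 x = h.1 x) →
      d g h < (2⁻¹ : ℝ) ^ n := by
    intro g h n hagr
    by_cases hx : ∃ m, Pd g h m
    · rw [hd_eq g h hx]
      obtain ⟨x, hx1, hx2⟩ := Nat.find_spec hx
      have hgt : n < Nat.find hx := by
        by_contra hc
        exact hx2 (hagr x (by omega))
      exact pow_lt_pow_right_of_lt_one₀ (by norm_num) (by norm_num) hgt
    · rw [hd_eq0 g h hx]
      positivity
  have hdtri : ∀ g h k : G, d g k ≤ d g h + d h k := by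
    intro g h k
    have hmax : d g k ≤ max (d g h) (d h k) := by
      by_cases hx : ∃ n, Pd g k n
      · rw [hd_eq g k hx]
        obtain ⟨x, hx1, hx2⟩ := Nat.find_spec hx
        rcases eq_or_ne (g.1 x) (h.1 x) with he | hne2
        · have hne3 : h.1 x ≠ k.1 x := fun hc => hx2 (he.trans hc)
          have hex : ∃ n, Pd h k n := ⟨ι x, x, rfl, hne3⟩
          refine le_trans ?_ (le_max_right _ _)
          rw [hd_eq h k hex]
          apply pow_le_pow_of_le_one (by norm_num) (by norm_num)
          exact le_trans (Nat.find_le ⟨x, rfl, hne3⟩) (le_of_eq hx1)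
        · have hex : ∃ n, Pd g h n := ⟨ι x, x, rfl, hne2⟩
          refine le_trans ?_ (le_max_left _ _)
          rw [hd_eq g h hex]
          apply pow_le_pow_of_le_one (by norm_num) (by norm_num)
          exact le_trans (Nat.find_le ⟨x, rfl, hne2⟩) (le_of_eq hx1)
      · rw [hd_eq0 g k hx]
        exact le_max_of_le_left (hdnn g h)
    exact le_trans hmax (max_le_add_of_nonneg (hdnn g h) (hdnn h k))
  have hlinv : ∀ g h h' : G, d (g * h) (g * h') = d h h' := by
    intro g h h'
    refine hdcongr _ _ _ _ fun n => ?_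
    have happ : ∀ (k : G) (x : L →₀ ℤ), (g * k).1 x = g.1 (k.1 x) := by
      intro k x
      rw [Subgroup.coe_mul]
      rfl
    constructor
    · rintro ⟨x, h1, h2⟩
      refine ⟨x, h1, fun hc => h2 ?_⟩
      rw [happ, happ, hc]
    · rintro ⟨x, h1, h2⟩
      refine ⟨x, h1, fun hc => h2 ?_⟩
      rw [happ, happ] at hc
      exact g.1.injective hc
  letI m : MetricSpace G :=
    { dist := d
      dist_self := hd0
      dist_comm := hdsymm
      dist_triangle := hdtri
      eq_of_dist_eq_zero := fun {g h} h0 => by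
        by_contra hne
        exact absurd h0 (ne_of_gt (hdpos g h hne)) }
  have hdist : ∀ g h : G, dist g h = d g h := fun _ _ => rfl
  refine ⟨m, ?_, ?_, ?_⟩
  · -- topology equality
    refine TopologicalSpace.ext_nhds fun g => ?_
    show @nhds G m.toPseudoMetricSpace.toUniformSpace.toTopologicalSpace g
        = @nhds G (TopologicalSpace.induced Subtype.val
        (TopologicalSpace.induced
          (fun f : Equiv.Perm (L →₀ ℤ) => (f : (L →₀ ℤ) → (L →₀ ℤ)))
          (@Pi.topologicalSpace (L →₀ ℤ) (fun _ => L →₀ ℤ) (fun _ => ⊥)))) g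
    rw [induced_compose]
    rw [@nhds_induced ((L →₀ ℤ) → (L →₀ ℤ)) G
      (@Pi.topologicalSpace (L →₀ ℤ) (fun _ => L →₀ ℤ) (fun _ => ⊥)) _ g]
    have hnhds_pi : @nhds ((L →₀ ℤ) → (L →₀ ℤ))
        (@Pi.topologicalSpace (L →₀ ℤ) (fun _ => L →₀ ℤ) (fun _ => ⊥))
        (fun x => g.1 x)
        = Filter.pi fun x => pure (g.1 x) := by
      rw [@nhds_pi (L →₀ ℤ) (fun _ => L →₀ ℤ) (fun _ => ⊥) (fun x => g.1 x)]
      congr 1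
      funext x
      exact congrFun (@nhds_discrete (L →₀ ℤ) ⊥ (discreteTopology_bot _)) (g.1 x)
    have hcomp : ((fun f : Equiv.Perm (L →₀ ℤ) => (f : (L →₀ ℤ) → (L →₀ ℤ))) ∘ Subtype.val)
        = fun (g : G) => ((g.1 : Equiv.Perm (L →₀ ℤ)) : (L →₀ ℤ) → (L →₀ ℤ)) := rfl
    rw [hcomp]
    have : (fun (h : G) => ((h.1 : Equiv.Perm (L →₀ ℤ)) : (L →₀ ℤ) → (L →₀ ℤ))) g
        = fun x => g.1 x := rfl
    rw [this, hnhds_pi]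
    refine Filter.ext fun s => ?_
    rw [@Metric.mem_nhds_iff G m.toPseudoMetricSpace g s, Filter.mem_comap]
    constructor
    · rintro ⟨ε, hε, hball⟩
      obtain ⟨n, hn⟩ := exists_pow_lt_of_lt_one hε (by norm_num : (2⁻¹ : ℝ) < 1)
      have hIfin : (ι ⁻¹' (Set.Iic n)).Finite :=
        Set.Finite.preimage (Set.injOn_of_injective hι) (Set.finite_Iic n)
      refine ⟨(ι ⁻¹' (Set.Iic n)).pi fun x => {g.1 x}, ?_, ?_⟩
      · rw [Filter.mem_pi]
        exact ⟨ι ⁻¹' (Set.Iic n), hIfin, fun x => {g.1 x}, fun x => rfl, subset_rfl⟩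
      · intro h hh
        apply hball
        have hax : ∀ x, ι x ≤ n → h.1 x = g.1 x := fun x hx => hh x hx
        have hlt : d h g < ε := lt_trans (hsmall h g n hax) hn
        show dist h g < ε
        rw [hdist]
        exact hlt
    · rintro ⟨V, hV, hVs⟩
      rw [Filter.mem_pi] at hV
      obtain ⟨I, hIfin, tset, htset, hsub⟩ := hV
      have hn : ∃ n : ℕ, ∀ x ∈ I, ι x ≤ n := by
        rcases I.eq_empty_or_nonempty with rfl | hne
        · exact ⟨0, fun x hx => absurd hx (Set.notMem_empty x)⟩
        · exact ⟨(hIfin.toFinset).sup ι, fun x hx =>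
            Finset.le_sup (hIfin.mem_toFinset.mpr hx)⟩
      obtain ⟨n, hn⟩ := hn
      refine ⟨(2⁻¹ : ℝ) ^ n, by positivity, ?_⟩
      intro h hh
      apply hVs
      apply hsub
      intro x hx
      have hdh : dist h g < (2⁻¹ : ℝ) ^ n := hh
      rw [hdist] at hdh
      have heqx : h.1 x = g.1 x := hagree h g n hdh x (hn x hx)
      show h.1 x ∈ tset x
      rw [heqx]
      simpa using htset x
  · -- completeness
    apply Metric.complete_of_cauchySeq_tendsto
    intro u hu
    rw [Metric.cauchySeq_iff] at hu
    have hstab0 : ∀ x : L →₀ ℤ, ∃ N, ∀ n ≥ N, (u n).1 x = (u N).1 x := by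
      intro x
      obtain ⟨N, hN⟩ := hu ((2⁻¹ : ℝ) ^ (ι x)) (by positivity)
      refine ⟨N, fun n hn => ?_⟩
      have h2 := hN n hn N (le_refl N)
      rw [hdist] at h2
      exact hagree _ _ (ι x) h2 x (le_refl _)
    choose Nf hNf using hstab0
    set fl : (L →₀ ℤ) → (L →₀ ℤ) := fun x => (u (Nf x)).1 x with hfl
    have hstab : ∀ x : L →₀ ℤ, ∀ n ≥ Nf x, (u n).1 x = fl x := by
      intro x n hn
      rw [hfl]
      exact hNf x n hn
    have hsurj : Function.Surjective fl :=
      stable_limit_surjective hwf (fun n => (u n).1) (fun n => (u n).2) fl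
        (fun x => ⟨Nf x, hstab x⟩)
    have hiff : ∀ a b : L →₀ ℤ, zlex a b ↔ zlex (fl a) (fl b) := by
      intro a b
      rw [← hstab a (max (Nf a) (Nf b)) (le_max_left _ _),
        ← hstab b (max (Nf a) (Nf b)) (le_max_right _ _)]
      exact (mem_zAut_iff.mp (u (max (Nf a) (Nf b))).2) a b
    have hinj : Function.Injective fl := by
      intro a b hab
      by_contra hne
      rcases zlex_total hne with h' | h'
      · exact zlex_ne ((hiff a b).mp h') hab
      · exact zlex_ne ((hiff b a).mp h') hab.symm
    set P : Equiv.Perm (L →₀ ℤ) := Equiv.ofBijective fl ⟨hinj, hsurj⟩ with hP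
    have hPapp : ∀ x, P x = fl x := fun x => rfl
    have hPmem : P ∈ zAut L := by
      rw [mem_zAut_iff]
      intro a b
      rw [hPapp, hPapp]
      exact hiff a b
    refine ⟨⟨P, hPmem⟩, ?_⟩
    rw [Metric.tendsto_atTop]
    intro ε hε
    obtain ⟨n₀, hn₀⟩ := exists_pow_lt_of_lt_one hε (by norm_num : (2⁻¹ : ℝ) < 1)
    have hIfin : (ι ⁻¹' (Set.Iic n₀)).Finite :=
      Set.Finite.preimage (Set.injOn_of_injective hι) (Set.finite_Iic n₀)
    refine ⟨hIfin.toFinset.sup Nf, fun n hn => ?_⟩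
    have hagr : ∀ x, ι x ≤ n₀ → (u n).1 x = ((⟨P, hPmem⟩ : G)).1 x := by
      intro x hx
      have h3 : ((⟨P, hPmem⟩ : G)).1 x = fl x := hPapp x
      rw [h3]
      exact hstab x n (le_trans (Finset.le_sup (hIfin.mem_toFinset.mpr hx)) hn)
    have hlt := hsmall (u n) ⟨P, hPmem⟩ n₀ hagr
    rw [hdist]
    exact lt_trans hlt hn₀
  · -- left invariance
    intro g h h'
    rw [hdist, hdist]
    exact hlinv g h h'

end CLIwf

section Psi
variable (Mp : L → Prop) [DecidablePred Mp]

lemma filt_mem (a : L →₀ ℤ) : ∀ ℓ, (a.filter Mp) ℓ ≠ 0 → Mp ℓ := by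
  intro ℓ hp
  rw [Finsupp.filter_apply] at hp
  by_contra hc
  rw [if_neg hc] at hp
  exact hp rfl

lemma filt_mem_neg (a : L →₀ ℤ) : ∀ ℓ, (a.filter (fun ℓ => ¬ Mp ℓ)) ℓ ≠ 0 → ¬ Mp ℓ := by
  intro ℓ hp hMp
  rw [Finsupp.filter_apply] at hp
  rw [if_neg (not_not_intro hMp)] at hp
  exact hp rfl

lemma decompM (o s : L →₀ ℤ) (ho : ∀ ℓ, o ℓ ≠ 0 → ¬ Mp ℓ) (hs : ∀ ℓ, s ℓ ≠ 0 → Mp ℓ) :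
    (o + s).filter Mp = s ∧ (o + s).filter (fun ℓ => ¬ Mp ℓ) = o := by
  constructor
  · ext ℓ
    rw [Finsupp.filter_apply, Finsupp.add_apply]
    split_ifs with h
    · have ho0 : o ℓ = 0 := by
        by_contra hc
        exact ho ℓ hc h
      rw [ho0, zero_add]
    · have hs0 : s ℓ = 0 := by
        by_contra hc
        exact h (hs ℓ hc)
      exact hs0.symm
  · ext ℓ
    rw [Finsupp.filter_apply, Finsupp.add_apply]
    split_ifs with h
    · have ho0 : o ℓ = 0 := by
        by_contra hc
        exact ho ℓ hc h
      exact ho0.symm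
    · have hs0 : s ℓ = 0 := by
        by_contra hc
        exact h (hs ℓ hc)
      rw [hs0, add_zero]

lemma recombM (a : L →₀ ℤ) :
    a.filter (fun ℓ => ¬ Mp ℓ) + a.filter Mp = a := by
  ext ℓ
  rw [Finsupp.add_apply, Finsupp.filter_apply, Finsupp.filter_apply]
  by_cases h : Mp ℓ
  · rw [if_pos h, if_neg (not_not_intro h), zero_add]
  · rw [if_neg h, if_pos h, add_zero]

/-- extension of an automorphism of the `Mp`-supported part to all of `ℤ[L]` -/
noncomputable def psi
    (σ : {a : L →₀ ℤ // ∀ ℓ, a ℓ ≠ 0 → Mp ℓ} ≃ {a : L →₀ ℤ // ∀ ℓ, a ℓ ≠ 0 → Mp ℓ}) :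
    Equiv.Perm (L →₀ ℤ) where
  toFun a := a.filter (fun ℓ => ¬ Mp ℓ) + (σ ⟨a.filter Mp, filt_mem Mp a⟩).1
  invFun a := a.filter (fun ℓ => ¬ Mp ℓ) + (σ.symm ⟨a.filter Mp, filt_mem Mp a⟩).1
  left_inv := by
    intro a
    obtain ⟨h1, h2⟩ := decompM Mp (a.filter (fun ℓ => ¬ Mp ℓ))
      ((σ ⟨a.filter Mp, filt_mem Mp a⟩).1) (filt_mem_neg Mp a)
      ((σ ⟨a.filter Mp, filt_mem Mp a⟩).2)
    simp only [h1, h2]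
    have h3 : (⟨(σ ⟨a.filter Mp, filt_mem Mp a⟩).1,
        (σ ⟨a.filter Mp, filt_mem Mp a⟩).2⟩ :
        {a : L →₀ ℤ // ∀ ℓ, a ℓ ≠ 0 → Mp ℓ}) = σ ⟨a.filter Mp, filt_mem Mp a⟩ := rfl
    rw [h3, σ.symm_apply_apply]
    exact recombM Mp a
  right_inv := by
    intro a
    obtain ⟨h1, h2⟩ := decompM Mp (a.filter (fun ℓ => ¬ Mp ℓ))
      ((σ.symm ⟨a.filter Mp, filt_mem Mp a⟩).1) (filt_mem_neg Mp a)
      ((σ.symm ⟨a.filter Mp, filt_mem Mp a⟩).2)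
    simp only [h1, h2]
    have h3 : (⟨(σ.symm ⟨a.filter Mp, filt_mem Mp a⟩).1,
        (σ.symm ⟨a.filter Mp, filt_mem Mp a⟩).2⟩ :
        {a : L →₀ ℤ // ∀ ℓ, a ℓ ≠ 0 → Mp ℓ}) = σ.symm ⟨a.filter Mp, filt_mem Mp a⟩ := rfl
    rw [h3, σ.apply_symm_apply]
    exact recombM Mp a

lemma psi_apply
    (σ : {a : L →₀ ℤ // ∀ ℓ, a ℓ ≠ 0 → Mp ℓ} ≃ {a : L →₀ ℤ // ∀ ℓ, a ℓ ≠ 0 → Mp ℓ})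
    (a : L →₀ ℤ) (ℓ : L) :
    psi Mp σ a ℓ = if Mp ℓ then (σ ⟨a.filter Mp, filt_mem Mp a⟩).1 ℓ else a ℓ := by
  show (a.filter (fun ℓ => ¬ Mp ℓ) + (σ ⟨a.filter Mp, filt_mem Mp a⟩).1) ℓ = _
  rw [Finsupp.add_apply, Finsupp.filter_apply]
  split_ifs with h
  · rw [zero_add]
  · have : (σ ⟨a.filter Mp, filt_mem Mp a⟩).1 ℓ = 0 := by
      by_contra hc
      exact h ((σ ⟨a.filter Mp, filt_mem Mp a⟩).2 ℓ hc)
    rw [this, add_zero]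

lemma psi_mono
    (hsplit : ∀ x, ¬ Mp x → (∀ m, Mp m → m < x) ∨ (∀ m, Mp m → x < m))
    (σ : {a : L →₀ ℤ // ∀ ℓ, a ℓ ≠ 0 → Mp ℓ} ≃ {a : L →₀ ℤ // ∀ ℓ, a ℓ ≠ 0 → Mp ℓ})
    (hσ : ∀ s t, zlex s.1 t.1 → zlex (σ s).1 (σ t).1)
    {a b : L →₀ ℤ} (h : zlex a b) : zlex (psi Mp σ a) (psi Mp σ b) := by
  obtain ⟨w, w1, w2⟩ := h
  by_cases hMw : Mp w
  · -- difference inside M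
    have hab : zlex (⟨a.filter Mp, filt_mem Mp a⟩ :
        {a : L →₀ ℤ // ∀ ℓ, a ℓ ≠ 0 → Mp ℓ}).1 (⟨b.filter Mp, filt_mem Mp b⟩ :
        {a : L →₀ ℤ // ∀ ℓ, a ℓ ≠ 0 → Mp ℓ}).1 := by
      refine ⟨w, ?_, fun ℓ' hl' => ?_⟩
      · simp only [Finsupp.filter_apply, if_pos hMw]
        exact w1
      · simp only [Finsupp.filter_apply]
        split_ifs with h'
        · exact w2 ℓ' hl'
        · rfl
    obtain ⟨v, v1, v2⟩ := hσ _ _ hab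
    have hMv : Mp v := by
      rcases eq_or_ne ((σ ⟨a.filter Mp, filt_mem Mp a⟩).1 v) 0 with h0 | h0
      · exact (σ ⟨b.filter Mp, filt_mem Mp b⟩).2 v (by omega)
      · exact (σ ⟨a.filter Mp, filt_mem Mp a⟩).2 v h0
    refine ⟨v, ?_, fun ℓ' hl' => ?_⟩
    · rw [psi_apply, psi_apply, if_pos hMv, if_pos hMv]
      exact v1
    · rw [psi_apply, psi_apply]
      split_ifs with h'
      · exact v2 ℓ' hl'
      · rcases hsplit ℓ' h' with hcase | hcase
        · exact w2 ℓ' (hcase w hMw)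
        · exact absurd (hcase v hMv) (not_lt.mpr (le_of_lt hl'))
  · rcases hsplit w hMw with hcase | hcase
    · -- w above all of M
      refine ⟨w, ?_, fun ℓ' hl' => ?_⟩
      · rw [psi_apply, psi_apply, if_neg hMw, if_neg hMw]
        exact w1
      · have hℓ' : ¬ Mp ℓ' := fun hc => absurd (hcase ℓ' hc) (not_lt.mpr (le_of_lt hl'))
        rw [psi_apply, psi_apply, if_neg hℓ', if_neg hℓ']
        exact w2 ℓ' hl'
    · -- w below all of M : the M-parts agree
      have haMbM : (⟨a.filter Mp, filt_mem Mp a⟩ :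
          {a : L →₀ ℤ // ∀ ℓ, a ℓ ≠ 0 → Mp ℓ}) = ⟨b.filter Mp, filt_mem Mp b⟩ := by
        apply Subtype.ext
        ext ℓ
        simp only [Finsupp.filter_apply]
        split_ifs with h'
        · exact w2 ℓ (hcase ℓ h')
        · rfl
      refine ⟨w, ?_, fun ℓ' hl' => ?_⟩
      · rw [psi_apply, psi_apply, if_neg hMw, if_neg hMw]
        exact w1
      · rw [psi_apply, psi_apply]
        split_ifs with h'
        · rw [haMbM]
        · exact w2 ℓ' hl'

lemma psi_mem
    (hsplit : ∀ x, ¬ Mp x → (∀ m, Mp m → m < x) ∨ (∀ m, Mp m → x < m))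
    (σ : {a : L →₀ ℤ // ∀ ℓ, a ℓ ≠ 0 → Mp ℓ} ≃ {a : L →₀ ℤ // ∀ ℓ, a ℓ ≠ 0 → Mp ℓ})
    (hσ : ∀ s t, zlex s.1 t.1 ↔ zlex (σ s).1 (σ t).1) :
    psi Mp σ ∈ zAut L := by
  rw [mem_zAut_iff]
  intro a b
  constructor
  · exact psi_mono Mp hsplit σ (fun s t => (hσ s t).mp)
  · intro h
    have hσ' : ∀ s t, zlex s.1 t.1 → zlex (σ.symm s).1 (σ.symm t).1 := by
      intro s t hst
      have := (hσ (σ.symm s) (σ.symm t)).mpr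
      rw [σ.apply_symm_apply, σ.apply_symm_apply] at this
      exact this hst
    have h2 := psi_mono Mp hsplit σ.symm hσ' h
    have h3 : ∀ c, psi Mp σ.symm (psi Mp σ c) = c := by
      intro c
      have := (psi Mp σ).left_inv c
      exact this
    rw [h3, h3] at h2
    exact h2
end Psi

section RatPL

/-- the limit embedding of `ℚ` into itself, jumping over `[0,1)` -/
def hQ (x : ℚ) : ℚ := if x < 0 then x else x + 1

lemma hQ_ne_half (q : ℚ) : hQ q ≠ 1/2 := by
  rw [hQ]
  split_ifs with h
  · intro hc; rw [hc] at h; norm_num at h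
  · intro hc
    have : q = -1/2 := by linarith
    rw [this] at h; norm_num at h

/-- the piecewise-linear approximating automorphisms of `ℚ` -/
def phiQ (n : ℕ) : ℚ ≃ ℚ where
  toFun x := if x < -(1/((n:ℚ)+1)) then x else if x < 0 then ((n:ℚ)+2)*x + 1 else x + 1
  invFun y := if y < -(1/((n:ℚ)+1)) then y else if y < 1 then (y - 1)/((n:ℚ)+2) else y - 1
  left_inv := by
    intro x
    dsimp only
    have he : (0:ℚ) < 1/((n:ℚ)+1) := by positivity
    have hn2 : (0:ℚ) < (n:ℚ)+2 := by positivity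
    have hE : (1/((n:ℚ)+1)) * ((n:ℚ)+1) = 1 := by field_simp
    by_cases h1 : x < -(1/((n:ℚ)+1))
    · rw [if_pos h1, if_pos h1]
    · rw [if_neg h1]
      push_neg at h1
      by_cases h2 : x < 0
      · rw [if_pos h2]
        have hy1 : ¬ (((n:ℚ)+2)*x + 1 < -(1/((n:ℚ)+1))) := by
          push_neg
          nlinarith [hE, mul_le_mul_of_nonneg_left h1 hn2.le]
        have hy2 : ((n:ℚ)+2)*x + 1 < 1 := by nlinarith [mul_neg_of_pos_of_neg hn2 h2]
        rw [if_neg hy1, if_pos hy2]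
        field_simp
        ring
      · rw [if_neg h2]
        push_neg at h2
        have hy1 : ¬ (x + 1 < -(1/((n:ℚ)+1))) := by push_neg; linarith
        have hy2 : ¬ (x + 1 < 1) := by push_neg; linarith
        rw [if_neg hy1, if_neg hy2]
        ring
  right_inv := by
    intro y
    dsimp only
    have he : (0:ℚ) < 1/((n:ℚ)+1) := by positivity
    have hn2 : (0:ℚ) < (n:ℚ)+2 := by positivity
    have hE : (1/((n:ℚ)+1)) * ((n:ℚ)+1) = 1 := by field_simp
    by_cases h1 : y < -(1/((n:ℚ)+1))
    · rw [if_pos h1, if_pos h1]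
    · rw [if_neg h1]
      push_neg at h1
      by_cases h2 : y < 1
      · rw [if_pos h2]
        have hx1 : ¬ ((y - 1)/((n:ℚ)+2) < -(1/((n:ℚ)+1))) := by
          push_neg
          rw [le_div_iff₀ hn2]
          nlinarith [hE]
        have hx2 : (y - 1)/((n:ℚ)+2) < 0 :=
          div_neg_of_neg_of_pos (by linarith) hn2
        rw [if_neg hx1, if_pos hx2]
        field_simp
        ring
      · rw [if_neg h2]
        push_neg at h2
        have hx1 : ¬ (y - 1 < -(1/((n:ℚ)+1))) := by push_neg; linarith
        have hx2 : ¬ (y - 1 < 0) := by push_neg; linarith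
        rw [if_neg hx1, if_neg hx2]
        ring

lemma phiQ_strictMono (n : ℕ) : StrictMono (phiQ n) := by
  intro x y hxy
  have he : (0:ℚ) < 1/((n:ℚ)+1) := by positivity
  have hn2 : (0:ℚ) < (n:ℚ)+2 := by positivity
  have hE : (1/((n:ℚ)+1)) * ((n:ℚ)+1) = 1 := by field_simp
  show (if x < -(1/((n:ℚ)+1)) then x else if x < 0 then ((n:ℚ)+2)*x + 1 else x + 1)
    < (if y < -(1/((n:ℚ)+1)) then y else if y < 0 then ((n:ℚ)+2)*y + 1 else y + 1)
  split_ifs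
  all_goals (try push_neg at *)
  all_goals try linarith
  all_goals
    nlinarith [hE, mul_le_mul_of_nonneg_left
      (show -(1/((n:ℚ)+1)) ≤ y from by linarith) hn2.le,
      mul_lt_mul_of_pos_left hxy hn2,
      mul_neg_of_pos_of_neg hn2 (show x < (0:ℚ) from by linarith)]

lemma phiQ_lt_iff (n : ℕ) (q q' : ℚ) : q < q' ↔ phiQ n q < phiQ n q' :=
  ⟨fun h => phiQ_strictMono n h, fun h => (phiQ_strictMono n).lt_iff_lt.mp h⟩

lemma phiQ_stab (q : ℚ) : ∃ N, ∀ n ≥ N, phiQ n q = hQ q := by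
  by_cases hq : q < 0
  · obtain ⟨N, hN⟩ := exists_nat_gt (1 / (-q))
    refine ⟨N, fun n hn => ?_⟩
    have hq' : (0:ℚ) < -q := by linarith
    have h1 : 1 / (-q) < (n:ℚ) + 1 := by
      have : (N:ℚ) ≤ (n:ℚ) := by exact_mod_cast hn
      linarith
    have h2 : 1/((n:ℚ)+1) < -q := by
      rw [div_lt_iff₀ (by positivity)]
      rw [div_lt_iff₀ hq'] at h1
      nlinarith
    have h3 : q < -(1/((n:ℚ)+1)) := by linarith
    show (if q < -(1/((n:ℚ)+1)) then q else if q < 0 then ((n:ℚ)+2)*q + 1 else q + 1) = hQ q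
    rw [if_pos h3, hQ, if_pos hq]
  · refine ⟨0, fun n _ => ?_⟩
    push_neg at hq
    have he : (0:ℚ) < 1/((n:ℚ)+1) := by positivity
    have h1 : ¬ (q < -(1/((n:ℚ)+1))) := by push_neg; linarith
    show (if q < -(1/((n:ℚ)+1)) then q else if q < 0 then ((n:ℚ)+2)*q + 1 else q + 1) = hQ q
    rw [if_neg h1, if_neg (not_lt.mpr hq), hQ, if_neg (not_lt.mpr hq)]

end RatPL

lemma nhds_perm_sub (g0 : ↥(zAut L)) :
    @nhds ↥(zAut L)
      (@instTopologicalSpaceSubtype (Equiv.Perm (L →₀ ℤ)) (fun x => x ∈ zAut L)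
        (permTop (L →₀ ℤ))) g0
      = Filter.comap
          (fun h : ↥(zAut L) => ((h.1 : Equiv.Perm (L →₀ ℤ)) : (L →₀ ℤ) → (L →₀ ℤ)))
          (Filter.pi fun x => pure (g0.1 x)) := by
  show @nhds _ (TopologicalSpace.induced Subtype.val (TopologicalSpace.induced
      (fun f : Equiv.Perm (L →₀ ℤ) => (f : (L →₀ ℤ) → (L →₀ ℤ)))
      (@Pi.topologicalSpace (L →₀ ℤ) (fun _ => L →₀ ℤ) (fun _ => ⊥)))) g0 = _
  rw [induced_compose]
  rw [@nhds_induced ((L →₀ ℤ) → (L →₀ ℤ)) _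
    (@Pi.topologicalSpace (L →₀ ℤ) (fun _ => L →₀ ℤ) (fun _ => ⊥)) _ g0]
  have hnhds_pi : @nhds ((L →₀ ℤ) → (L →₀ ℤ))
      (@Pi.topologicalSpace (L →₀ ℤ) (fun _ => L →₀ ℤ) (fun _ => ⊥)) (fun x => g0.1 x)
      = Filter.pi fun x => pure (g0.1 x) := by
    rw [@nhds_pi (L →₀ ℤ) (fun _ => L →₀ ℤ) (fun _ => ⊥) (fun x => g0.1 x)]
    congr 1
    funext x
    exact congrFun (@nhds_discrete (L →₀ ℤ) ⊥ (discreteTopology_bot _)) (g0.1 x)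
  have hcomp : ((fun f : Equiv.Perm (L →₀ ℤ) => (f : (L →₀ ℤ) → (L →₀ ℤ))) ∘ Subtype.val)
      = fun (h : ↥(zAut L)) => ((h.1 : Equiv.Perm (L →₀ ℤ)) : (L →₀ ℤ) → (L →₀ ℤ)) := rfl
  rw [hcomp]
  have h2 : (fun (h : ↥(zAut L)) =>
      ((h.1 : Equiv.Perm (L →₀ ℤ)) : (L →₀ ℤ) → (L →₀ ℤ))) g0 = fun x => g0.1 x := rfl
  rw [h2, hnhds_pi]

section NotCLI
variable [Countable L]

set_option maxHeartbeats 1000000 in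
lemma not_isCLI_of_not_wf (hnwf : ¬ WellFoundedLT L) :
    letI : TopologicalSpace (Equiv.Perm (L →₀ ℤ)) := permTop (L →₀ ℤ)
    ¬ IsCLI ↥(zAut L) := by
  classical
  letI tP : TopologicalSpace (Equiv.Perm (L →₀ ℤ)) := permTop (L →₀ ℤ)
  intro hCLI
  obtain ⟨m, hteq, hcompl, hlinv⟩ := hCLI
  letI := m
  -- descending chain
  have h' : ¬ WellFounded ((· < ·) : L → L → Prop) := fun w => hnwf ⟨w⟩
  have h2 : ¬ IsEmpty ((fun a b : ℕ => a > b) ↪r ((· < ·) : L → L → Prop)) :=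
    fun hie => h' (RelEmbedding.wellFounded_iff_isEmpty.mpr hie)
  obtain ⟨emb⟩ := not_isEmpty_iff.mp h2
  have hl : ∀ k : ℕ, (fun k => emb k) (k + 1) < (fun k => emb k) k :=
    fun k => emb.map_rel_iff.mpr (Nat.lt_succ_self k)
  obtain ⟨e, he⟩ := exists_rat_iso (fun k => emb k) hl
  set l : ℕ → L := fun k => emb k with hldef
  set Mp : L → Prop := fun ℓ => ℓ ≤ l 0 ∧ ∃ k, l k ≤ ℓ with hMp
  have he' : ∀ s t : {a : L →₀ ℤ // ∀ ℓ, a ℓ ≠ 0 → Mp ℓ},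
      zlex s.1 t.1 ↔ e s < e t := fun s t => he s t
  have hsplit : ∀ x, ¬ Mp x → (∀ mm, Mp mm → mm < x) ∨ (∀ mm, Mp mm → x < mm) := by
    intro x hx
    by_cases hle : x ≤ l 0
    · right
      intro mm hm
      have hxk : ∀ k, x < l k := by
        intro k
        by_contra hc
        exact hx ⟨hle, k, not_lt.mp hc⟩
      obtain ⟨hm1, k, hk⟩ := hm
      exact lt_of_lt_of_le (hxk k) hk
    · left
      intro mm hm
      exact lt_of_le_of_lt hm.1 (not_le.mp hle)
  set σf : ℕ → ({a : L →₀ ℤ // ∀ ℓ, a ℓ ≠ 0 → Mp ℓ} ≃ {a : L →₀ ℤ // ∀ ℓ, a ℓ ≠ 0 → Mp ℓ}) :=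
    fun n => (e.trans (phiQ n)).trans e.symm with hσdef
  have hσ : ∀ n (s t : {a : L →₀ ℤ // ∀ ℓ, a ℓ ≠ 0 → Mp ℓ}),
      zlex s.1 t.1 ↔ zlex ((σf n) s).1 ((σf n) t).1 := by
    intro n s t
    have h1 : (σf n) s = e.symm (phiQ n (e s)) := rfl
    have h2 : (σf n) t = e.symm (phiQ n (e t)) := rfl
    rw [h1, h2]
    constructor
    · intro h
      apply (he' _ _).mpr
      rw [e.apply_symm_apply, e.apply_symm_apply]
      exact (phiQ_lt_iff n _ _).mp ((he' s t).mp h)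
    · intro h
      have h3 := (he' _ _).mp h
      rw [e.apply_symm_apply, e.apply_symm_apply] at h3
      exact (he' s t).mpr ((phiQ_lt_iff n _ _).mpr h3)
  set Gp : ℕ → Equiv.Perm (L →₀ ℤ) := fun n => psi Mp (σf n) with hGp
  have memn : ∀ n, Gp n ∈ zAut L := fun n => psi_mem Mp hsplit (σf n) (hσ n)
  set u : ℕ → ↥(zAut L) := fun n => ⟨Gp n, memn n⟩ with hu
  set flimit : (L →₀ ℤ) → (L →₀ ℤ) := fun a =>
    a.filter (fun ℓ => ¬ Mp ℓ) + (e.symm (hQ (e ⟨a.filter Mp, filt_mem Mp a⟩))).1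
    with hflimit
  have hstabG : ∀ a, ∃ N, ∀ n ≥ N, Gp n a = flimit a := by
    intro a
    obtain ⟨N, hN⟩ := phiQ_stab (e ⟨a.filter Mp, filt_mem Mp a⟩)
    refine ⟨N, fun n hn => ?_⟩
    show a.filter (fun ℓ => ¬ Mp ℓ) + ((σf n) ⟨a.filter Mp, filt_mem Mp a⟩).1 = flimit a
    have h1 : (σf n) ⟨a.filter Mp, filt_mem Mp a⟩
        = e.symm (phiQ n (e ⟨a.filter Mp, filt_mem Mp a⟩)) := rfl
    rw [h1, hN n hn, hflimit]
  have hmiss : ∀ a, flimit a ≠ (e.symm (1/2 : ℚ)).1 := by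
    intro a hc
    obtain ⟨hd1, hd2⟩ := decompM Mp (a.filter (fun ℓ => ¬ Mp ℓ))
      ((e.symm (hQ (e ⟨a.filter Mp, filt_mem Mp a⟩))).1)
      (filt_mem_neg Mp a) ((e.symm _).2)
    have hbfil : ((e.symm (1/2 : ℚ)).1).filter Mp = (e.symm (1/2 : ℚ)).1 := by
      ext ℓ
      rw [Finsupp.filter_apply]
      split_ifs with h
      · rfl
      · rcases eq_or_ne ((e.symm (1/2 : ℚ)).1 ℓ) 0 with h0 | h0
        · rw [h0]
        · exact absurd ((e.symm (1/2 : ℚ)).2 ℓ h0) h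
    have h3 : (e.symm (hQ (e ⟨a.filter Mp, filt_mem Mp a⟩))).1 = (e.symm (1/2 : ℚ)).1 := by
      rw [← hd1]
      show (flimit a).filter Mp = _
      rw [hc, hbfil]
    have h4 : hQ (e ⟨a.filter Mp, filt_mem Mp a⟩) = 1/2 :=
      e.symm.injective (Subtype.ext h3)
    exact hQ_ne_half _ h4
  choose Nf hNf using hstabG
  -- Cauchy
  have hCauchy : CauchySeq u := by
    rw [Metric.cauchySeq_iff]
    intro ε hε
    have hball : Metric.ball (1 : ↥(zAut L)) ε ∈
        @nhds _ m.toPseudoMetricSpace.toUniformSpace.toTopologicalSpace 1 :=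
      @Metric.ball_mem_nhds _ m.toPseudoMetricSpace 1 ε hε
    rw [hteq] at hball
    rw [nhds_perm_sub 1] at hball
    rw [Filter.mem_comap] at hball
    obtain ⟨V, hV, hVsub⟩ := hball
    rw [Filter.mem_pi] at hV
    obtain ⟨I, hIfin, tset, htset, hsub⟩ := hV
    refine ⟨hIfin.toFinset.sup Nf, fun p hp q hq => ?_⟩
    have hd1 : dist (u p) (u q) = dist (1 : ↥(zAut L)) ((u p)⁻¹ * u q) := by
      have h5 := hlinv (u p)⁻¹ (u p) (u q)
      rw [inv_mul_cancel] at h5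
      exact h5.symm
    rw [hd1]
    have hmem : (u p)⁻¹ * u q ∈ Metric.ball (1 : ↥(zAut L)) ε := by
      apply hVsub
      apply hsub
      intro x hxI
      have hx1 : Gp p x = flimit x :=
        hNf x p (le_trans (Finset.le_sup (hIfin.mem_toFinset.mpr hxI)) hp)
      have hx2 : Gp q x = flimit x :=
        hNf x q (le_trans (Finset.le_sup (hIfin.mem_toFinset.mpr hxI)) hq)
      have happ : ((u p)⁻¹ * (u q)).1 x = ((u p).1)⁻¹ ((u q).1 x) := by
        rw [Subgroup.coe_mul, Subgroup.coe_inv]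
        rfl
      have hval : ((u p)⁻¹ * (u q)).1 x = x := by
        rw [happ]
        have : (u q).1 x = (u p).1 x := by
          show Gp q x = Gp p x
          rw [hx1, hx2]
        rw [this]
        exact Equiv.symm_apply_apply _ _
      show (((u p)⁻¹ * (u q)).1 : (L →₀ ℤ) → (L →₀ ℤ)) x ∈ tset x
      rw [hval]
      have h6 := htset x
      have h7 : (1 : ↥(zAut L)).1 x = x := rfl
      rw [h7] at h6
      simpa using h6
    have h8 : dist ((u p)⁻¹ * u q) (1 : ↥(zAut L)) < ε := hmem
    rw [dist_comm] at h8
    exact h8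
  haveI := hcompl
  obtain ⟨glim, hglim⟩ := cauchySeq_tendsto_of_complete hCauchy
  have hglim' : Filter.Tendsto u Filter.atTop
      (@nhds _ m.toPseudoMetricSpace.toUniformSpace.toTopologicalSpace glim) := hglim
  rw [hteq, nhds_perm_sub glim] at hglim'
  have hpt : ∀ x, ∃ N, ∀ n ≥ N, (u n).1 x = glim.1 x := by
    intro x
    have hset : Set.pi {x} (fun y => {glim.1 y}) ∈ Filter.pi fun y => pure (glim.1 y) := by
      rw [Filter.mem_pi]
      exact ⟨{x}, Set.finite_singleton x, fun y => {glim.1 y}, fun y => rfl, subset_rfl⟩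
    have hpre := hglim' (Filter.preimage_mem_comap hset)
    rw [Filter.mem_map] at hpre
    rw [Filter.mem_atTop_sets] at hpre
    obtain ⟨N, hN⟩ := hpre
    refine ⟨N, fun n hn => ?_⟩
    have h9 := hN n hn
    have h10 : ((u n).1 : (L →₀ ℤ) → (L →₀ ℤ)) x ∈ ({glim.1 x} : Set (L →₀ ℤ)) :=
      h9 x rfl
    exact h10
  have hglim_eq : ∀ x, glim.1 x = flimit x := by
    intro x
    obtain ⟨N1, h1⟩ := hpt x
    have h3 := h1 (max N1 (Nf x)) (le_max_left _ _)
    have h4 : Gp (max N1 (Nf x)) x = flimit x := hNf x _ (le_max_right _ _)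
    rw [← h3]
    exact h4
  obtain ⟨a, ha⟩ := glim.1.surjective ((e.symm (1/2 : ℚ)).1)
  exact hmiss a (by rw [← hglim_eq a, ha])

end NotCLI

end ZZ

/-- For a countable linear order `L`, the following are equivalent: `L` is a well-order;
`ℤ[L]` is scattered; `Aut(ℤ[L])` (with the topology of pointwise convergence) is CLI. -/
theorem wellOrder_iff_scattered_iff_aut_CLI (L : Type u) [LinearOrder L] [Countable L] :
    letI : TopologicalSpace (Equiv.Perm (L →₀ ℤ)) := permTop (L →₀ ℤ)
    ((WellFoundedLT L ↔ IsScatteredRel (zlex (L := L))) ∧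
      (WellFoundedLT L ↔ IsCLI ↥(zAut L))) := by
  refine ⟨⟨fun hwf => ZZ.scattered_of_wf hwf, fun hsc => ?_⟩,
    ⟨fun hwf => ZZ.isCLI_of_wf hwf, fun hcli => ?_⟩⟩
  · by_contra hnwf
    exact ZZ.not_scattered_of_not_wf hnwf hsc
  · by_contra hnwf
    exact ZZ.not_isCLI_of_not_wf hnwf hcli
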